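/- Let a, δ, K, M > 0 with δ ≤ 1 and define constants N₁ = √(2/λ₁) + 1/(1 - e^{-δλ₁/2}) for given λ₁ > 0. Suppose y : [0, t₁] → [0, ∞) is absolutely continuous with y(0) ≤ √(2/λ₁)·r, and y'(t) + (δλ₁/2) y(t) ≤ g(t) a.e. with ⧵g⧵₁ ≤ r (the sup over unit intervals of the integral of the zero extension of g). Then sup over [0, t₁] of y(t) ≤ N₁ r. -/

import Mathlib

open MeasureTheory Set

lemma exp_int (α u t : ℝ) (hut : u ≤ t) :
    ∫ s in Ioc u t, α * Real.exp (α * s) = Real.exp (α * t) - Real.exp (α * u) := by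
  rw [← intervalIntegral.integral_of_le hut]
  have h : ∀ x ∈ Set.uIcc u t, HasDerivAt (fun x => Real.exp (α * x)) (α * Real.exp (α * x)) x := by
    intro x _
    simpa [mul_comm, Function.comp_def] using ((Real.hasDerivAt_exp (α * x)).comp x ((hasDerivAt_id x).const_mul α))
  exact intervalIntegral.integral_eq_sub_of_hasDerivAt h
    (Continuous.intervalIntegrable (by continuity) u t)

lemma key_identity (α t : ℝ) (hα : 0 ≤ α) (ht : 0 ≤ t) (f : ℝ → ℝ)
    (hf : IntegrableOn f (Ioc 0 t)) :
    ∫ s in Ioc 0 t, α * Real.exp (α * s) * (∫ u in Ioc 0 s, f u)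
      = ∫ u in Ioc 0 t, (Real.exp (α * t) - Real.exp (α * u)) * f u := by
  set μ := volume.restrict (Ioc (0:ℝ) t) with hμ
  set F : ℝ → ℝ → ℝ := fun s u => if u ≤ s then α * Real.exp (α * s) * f u else 0 with hF
  have hmeas : MeasurableSet {p : ℝ × ℝ | p.2 ≤ p.1} :=
    measurableSet_le measurable_snd measurable_fst
  have huncurry : Function.uncurry F =
      {p : ℝ × ℝ | p.2 ≤ p.1}.indicator (fun p => α * Real.exp (α * p.1) * f p.2) := by
    funext p
    simp [hF, Function.uncurry, Set.indicator_apply]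
  have haesm : AEStronglyMeasurable (Function.uncurry F) (μ.prod μ) := by
    rw [huncurry]
    exact (((Continuous.aestronglyMeasurable (by continuity :
      Continuous fun s : ℝ => α * Real.exp (α * s))).comp_fst).mul
      (hf.aestronglyMeasurable.comp_snd)).indicator hmeas
  have hprodint : Integrable (Function.uncurry F) (μ.prod μ) := by
    have hbd : Integrable (fun p : ℝ × ℝ => (α * Real.exp (α * t)) * |f p.2|) (μ.prod μ) := by
      have : IsFiniteMeasure μ := by
        constructor
        rw [hμ, Measure.restrict_apply MeasurableSet.univ, univ_inter, Real.volume_Ioc]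
        exact ENNReal.ofReal_lt_top
      simpa using ((integrable_const (α * Real.exp (α * t))).mul_prod hf.abs)
    apply Integrable.mono' hbd haesm
    have hbox : μ.prod μ = (volume.prod volume).restrict ((Ioc 0 t) ×ˢ (Ioc 0 t)) := by
      rw [hμ, Measure.prod_restrict]
    rw [hbox]
    filter_upwards [ae_restrict_mem (measurableSet_Ioc.prod measurableSet_Ioc)] with p hp
    rcases hp with ⟨hp1, hp2⟩
    simp only [hF, Function.uncurry]
    by_cases hle : p.2 ≤ p.1
    · simp only [hle, if_true, Real.norm_eq_abs, abs_mul]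
      rw [abs_of_nonneg hα, abs_of_nonneg (Real.exp_pos _).le]
      have : Real.exp (α * p.1) ≤ Real.exp (α * t) :=
        Real.exp_le_exp.2 (mul_le_mul_of_nonneg_left hp1.2 hα)
      exact mul_le_mul_of_nonneg_right
        (mul_le_mul_of_nonneg_left this hα) (abs_nonneg _)
    · simp only [hle, if_false, norm_zero]
      positivity
  have hswap := MeasureTheory.integral_integral_swap hprodint
  -- LHS computation
  have hL : ∫ s, (∫ u, F s u ∂μ) ∂μ
      = ∫ s in Ioc 0 t, α * Real.exp (α * s) * (∫ u in Ioc 0 s, f u) := by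
    rw [hμ]
    apply integral_congr_ae
    filter_upwards [ae_restrict_mem measurableSet_Ioc] with s hs
    have : (fun u => F s u) = (Iic s).indicator (fun u => α * Real.exp (α * s) * f u) := by
      funext u; simp [hF, Set.indicator_apply]
    rw [this, integral_indicator measurableSet_Iic, Measure.restrict_restrict measurableSet_Iic]
    have hset : Iic s ∩ Ioc 0 t = Ioc 0 s := by
      ext x
      simp only [mem_inter_iff, mem_Iic, mem_Ioc]
      constructor
      · rintro ⟨h1, h2, h3⟩; exact ⟨h2, h1⟩
      · rintro ⟨h1, h2⟩; exact ⟨h2, h1, h2.trans hs.2⟩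
    rw [hset, integral_const_mul]
  -- RHS computation
  have hR : ∫ u, (∫ s, F s u ∂μ) ∂μ
      = ∫ u in Ioc 0 t, (Real.exp (α * t) - Real.exp (α * u)) * f u := by
    rw [hμ]
    apply integral_congr_ae
    filter_upwards [ae_restrict_mem measurableSet_Ioc] with u hu
    have : (fun s => F s u) = (Ici u).indicator (fun s => α * Real.exp (α * s) * f u) := by
      funext s; simp [hF, Set.indicator_apply]
    rw [this, integral_indicator measurableSet_Ici, Measure.restrict_restrict measurableSet_Ici]
    have hset : Ici u ∩ Ioc 0 t = Icc u t := by
      ext x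
      simp only [mem_inter_iff, mem_Ici, mem_Ioc, mem_Icc]
      constructor
      · rintro ⟨h1, _, h3⟩; exact ⟨h1, h3⟩
      · rintro ⟨h1, h2⟩; exact ⟨h1, lt_of_lt_of_le hu.1 h1, h2⟩
    rw [hset, integral_Icc_eq_integral_Ioc, integral_mul_const, exp_int α u t hu.2]
  rw [← hL, ← hR]
  exact hswap
lemma mul_intOn {φ h : ℝ → ℝ} {s : Set ℝ} (hs : MeasurableSet s) (C : ℝ)
    (hφ : Continuous φ) (hC : ∀ x ∈ s, |φ x| ≤ C) (hh : IntegrableOn h s) :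
    IntegrableOn (fun x => φ x * h x) s := by
  apply Integrable.mono' (hh.norm.const_mul C)
    ((hφ.aestronglyMeasurable.restrict).mul hh.aestronglyMeasurable)
  filter_upwards [ae_restrict_mem hs] with x hx
  simp only [Pi.mul_apply, norm_mul]
  exact mul_le_mul_of_nonneg_right (hC x hx) (norm_nonneg _)

lemma expIntOn {h : ℝ → ℝ} (α c a b : ℝ) (hh : Integrable h volume) :
    IntegrableOn (fun s => Real.exp (α * (s - c)) * h s) (Ioc a b) := by
  apply Integrable.mono' ((hh.norm.const_mul (Real.exp (|α| * (|a| + |b| + |c|)))).restrict)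
  · exact ((Real.continuous_exp.comp (by continuity)).aestronglyMeasurable.restrict).mul
      hh.aestronglyMeasurable.restrict
  · filter_upwards [ae_restrict_mem measurableSet_Ioc] with x hx
    rw [norm_mul, Real.norm_eq_abs, abs_of_nonneg (Real.exp_pos _).le]
    apply mul_le_mul_of_nonneg_right _ (norm_nonneg _)
    apply Real.exp_le_exp.2
    have h1 : |x| ≤ |a| + |b| := by
      rcases hx with ⟨hxa, hxb⟩
      rw [abs_le]
      constructor
      · nlinarith [neg_abs_le a, abs_nonneg b]
      · nlinarith [le_abs_self b, abs_nonneg a]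
    calc α * (x - c) ≤ |α * (x - c)| := le_abs_self _
      _ = |α| * |x - c| := abs_mul _ _
      _ ≤ |α| * (|x| + |c|) := by
          apply mul_le_mul_of_nonneg_left _ (abs_nonneg α)
          exact (abs_sub _ _).trans_eq rfl
      _ ≤ |α| * (|a| + |b| + |c|) := by nlinarith [abs_nonneg α]

lemma tail_bound (α r : ℝ) (hα : 0 < α) (h : ℝ → ℝ) (hh : Integrable h volume)
    (hnn : ∀ s, 0 ≤ h s)
    (hrr : ∀ s ≥ (0:ℝ), ∫ τ in s..(s + 1), h τ ≤ r) :
    ∀ n : ℕ, ∀ t : ℝ, 0 ≤ t → t ≤ n →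
      ∫ s in Ioc 0 t, Real.exp (α * (s - t)) * h s
        ≤ (∑ k ∈ Finset.range n, Real.exp (-α) ^ k) * r := by
  have hr0 : 0 ≤ r := le_trans
    (intervalIntegral.integral_nonneg (by norm_num) (fun x _ => hnn x)) (hrr 0 le_rfl)
  have hsumnn : ∀ n : ℕ, (0:ℝ) ≤ ∑ k ∈ Finset.range n, Real.exp (-α) ^ k := by
    intro n; positivity
  -- pieces bounded by r
  have hpiece : ∀ a t : ℝ, 0 ≤ a → t ≤ a + 1 →
      ∫ s in Ioc a t, Real.exp (α * (s - t)) * h s ≤ r := by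
    intro a t ha hta
    calc ∫ s in Ioc a t, Real.exp (α * (s - t)) * h s
        ≤ ∫ s in Ioc a t, h s := by
          apply setIntegral_mono_on (expIntOn α t a t hh)
            (hh.restrict) measurableSet_Ioc
          intro x hx
          have : Real.exp (α * (x - t)) ≤ 1 := by
            rw [← Real.exp_zero]
            apply Real.exp_le_exp.2
            nlinarith [hx.2]
          nlinarith [hnn x]
      _ ≤ ∫ s in Ioc a (a + 1), h s := by
          apply setIntegral_mono_set hh.restrict
          · filter_upwards with x using hnn x
          · exact HasSubset.Subset.eventuallyLE (Ioc_subset_Ioc_right hta)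
      _ = ∫ τ in a..(a + 1), h τ := (intervalIntegral.integral_of_le (by linarith)).symm
      _ ≤ r := hrr a ha
  intro n
  induction n with
  | zero =>
    intro t ht htn
    have : t = 0 := le_antisymm (by exact_mod_cast htn) ht
    subst this
    simp
  | succ n ih =>
    intro t ht htn
    by_cases hcase : t ≤ n
    · refine (ih t ht hcase).trans (mul_le_mul_of_nonneg_right ?_ hr0)
      apply Finset.sum_le_sum_of_subset_of_nonneg (Finset.range_subset_range.2 (Nat.le_succ n))
      intro i _ _; positivity
    · push_neg at hcase
      by_cases h1 : t ≤ 1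
      · have hone : (1:ℝ) ≤ ∑ k ∈ Finset.range (n + 1), Real.exp (-α) ^ k := by
          have := Finset.single_le_sum (f := fun k => Real.exp (-α) ^ k)
            (fun i _ => by positivity) (Finset.mem_range.2 (Nat.succ_pos n))
          simpa using this
        calc ∫ s in Ioc 0 t, Real.exp (α * (s - t)) * h s ≤ r :=
              hpiece 0 t le_rfl (by linarith)
          _ = 1 * r := (one_mul r).symm
          _ ≤ (∑ k ∈ Finset.range (n + 1), Real.exp (-α) ^ k) * r :=
              mul_le_mul_of_nonneg_right hone hr0
      · push_neg at h1
        have hsplit : ∫ s in Ioc 0 t, Real.exp (α * (s - t)) * h s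
            = (∫ s in Ioc 0 (t - 1), Real.exp (α * (s - t)) * h s)
              + ∫ s in Ioc (t - 1) t, Real.exp (α * (s - t)) * h s := by
          rw [← Ioc_union_Ioc_eq_Ioc (by linarith : (0:ℝ) ≤ t - 1) (by linarith : t - 1 ≤ t)]
          exact setIntegral_union (Set.Ioc_disjoint_Ioc_of_le le_rfl) measurableSet_Ioc
            (expIntOn α t 0 (t-1) hh) (expIntOn α t (t-1) t hh)
        have hfirst : ∫ s in Ioc 0 (t - 1), Real.exp (α * (s - t)) * h s
            = Real.exp (-α) * ∫ s in Ioc 0 (t - 1), Real.exp (α * (s - (t - 1))) * h s := by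
          rw [← integral_const_mul]
          apply setIntegral_congr_fun measurableSet_Ioc
          intro x _
          show Real.exp (α * (x - t)) * h x
            = Real.exp (-α) * (Real.exp (α * (x - (t - 1))) * h x)
          rw [← mul_assoc, ← Real.exp_add]
          congr 2
          ring
        have hih := ih (t - 1) (by linarith) (by push_cast at htn ⊢; linarith)
        have h2 : ∫ s in Ioc (t - 1) t, Real.exp (α * (s - t)) * h s ≤ r :=
          hpiece (t - 1) t (by linarith) (by linarith)
        rw [hsplit, hfirst]
        have hgeom : ∑ k ∈ Finset.range (n + 1), Real.exp (-α) ^ k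
            = Real.exp (-α) * ∑ k ∈ Finset.range n, Real.exp (-α) ^ k + 1 :=
          geom_sum_succ
        have hexp : (0:ℝ) ≤ Real.exp (-α) := (Real.exp_pos _).le
        nlinarith [mul_le_mul_of_nonneg_left hih hexp]

/-- Quantitative uniform Gronwall bound: if `y(0) ≤ √(2/λ₁) r` and
`y' + (δλ₁/2)y ≤ g` a.e. with unit-interval integrals of `|g̃|` bounded by `r`,
then `y(t) ≤ N₁ r` on `[0,t₁]`, where `N₁ = √(2/λ₁) + 1/(1 - e^{-δλ₁/2})`. -/
theorem small_data_L2_bound (δ lam1 r t₁ : ℝ)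
    (hδ : 0 < δ) (hδ1 : δ ≤ 1) (hlam1 : 0 < lam1) (hr : 0 < r) (ht₁ : 0 < t₁)
    (y y' g : ℝ → ℝ)
    (hynn : ∀ t ∈ Icc 0 t₁, 0 ≤ y t)
    (hy0 : y 0 ≤ Real.sqrt (2 / lam1) * r)
    (hy'int : IntegrableOn y' (Icc 0 t₁))
    (hFTC : ∀ t ∈ Icc 0 t₁, y t = y 0 + ∫ s in (0:ℝ)..t, y' s)
    (hg : IntegrableOn g (Icc 0 t₁))
    (hgbar : ∀ s ≥ (0:ℝ), ∫ τ in s..(s + 1), |Set.indicator (Icc 0 t₁) g τ| ≤ r)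
    (hae : ∀ᵐ t ∂(volume.restrict (Icc 0 t₁)),
      y' t + (δ * lam1 / 2) * y t ≤ g t) :
    ∀ t ∈ Icc 0 t₁,
      y t ≤ (Real.sqrt (2 / lam1) + 1 / (1 - Real.exp (-(δ * lam1 / 2)))) * r := by
  intro t htmem
  obtain ⟨ht0, htt₁⟩ := htmem
  set α := δ * lam1 / 2 with hαdef
  have hαpos : 0 < α := by positivity
  have hy0nn : 0 ≤ y 0 := hynn 0 ⟨le_rfl, ht₁.le⟩
  -- continuity of y on Icc 0 t₁
  have hprimcont : ContinuousOn (fun x => ∫ u in Ioc 0 x, y' u) (Icc 0 t₁) :=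
    intervalIntegral.continuousOn_primitive hy'int
  have hycont : ContinuousOn y (Icc 0 t₁) := by
    apply ContinuousOn.congr ((continuousOn_const (c := y 0)).add hprimcont)
    intro x hx
    rw [hFTC x hx, intervalIntegral.integral_of_le hx.1]
    rfl
  have hsub : Ioc 0 t ⊆ Icc 0 t₁ := fun x hx => ⟨hx.1.le, hx.2.trans htt₁⟩
  have hsubc : Icc 0 t ⊆ Icc 0 t₁ := Icc_subset_Icc le_rfl htt₁
  have hy'Ioc : IntegrableOn y' (Ioc 0 t) := hy'int.mono_set hsub
  -- integrability facts
  have hexpbd : ∀ x ∈ Ioc (0:ℝ) t, |Real.exp (α * x)| ≤ Real.exp (α * t) := by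
    intro x hx
    rw [abs_of_nonneg (Real.exp_pos _).le]
    exact Real.exp_le_exp.2 (mul_le_mul_of_nonneg_left hx.2 hαpos.le)
  have i1 : IntegrableOn (fun s => Real.exp (α * s) * y' s) (Ioc 0 t) :=
    mul_intOn measurableSet_Ioc (Real.exp (α * t)) (Real.continuous_exp.comp (continuous_const.mul continuous_id)) hexpbd hy'Ioc
  have i2 : IntegrableOn (fun s => α * Real.exp (α * s) * y s) (Ioc 0 t) := by
    apply IntegrableOn.mono_set _ Ioc_subset_Icc_self
    exact (((continuous_const.mul (Real.continuous_exp.comp (continuous_const.mul continuous_id))).continuousOn).mul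
      (hycont.mono hsubc)).integrableOn_compact isCompact_Icc
  have i3 : IntegrableOn
      (fun s => α * Real.exp (α * s) * (∫ u in Ioc 0 s, y' u)) (Ioc 0 t) := by
    apply IntegrableOn.mono_set _ Ioc_subset_Icc_self
    exact (((continuous_const.mul (Real.continuous_exp.comp (continuous_const.mul continuous_id))).continuousOn).mul
      (hprimcont.mono hsubc)).integrableOn_compact isCompact_Icc
  have ikey : IntegrableOn
      (fun u => (Real.exp (α * t) - Real.exp (α * u)) * y' u) (Ioc 0 t) := by
    apply mul_intOn measurableSet_Ioc (Real.exp (α * t))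
      (continuous_const.sub (Real.continuous_exp.comp (continuous_const.mul continuous_id)))
      _ hy'Ioc
    intro x hx
    have h1 : Real.exp (α * x) ≤ Real.exp (α * t) :=
      Real.exp_le_exp.2 (mul_le_mul_of_nonneg_left hx.2 hαpos.le)
    show |Real.exp (α * t) - Real.exp (α * x)| ≤ Real.exp (α * t)
    rw [abs_of_nonneg (by linarith)]
    linarith [Real.exp_pos (α * x)]
  have ig : IntegrableOn (fun s => Real.exp (α * s) * g s) (Ioc 0 t) :=
    mul_intOn measurableSet_Ioc (Real.exp (α * t)) (Real.continuous_exp.comp (continuous_const.mul continuous_id)) hexpbd (hg.mono_set hsub)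
  -- Step A: exact integrated identity
  have hstep : ∫ s in Ioc 0 t, (Real.exp (α * s) * y' s + α * Real.exp (α * s) * y s)
      = Real.exp (α * t) * y t - y 0 := by
    rw [integral_add i1 i2]
    have hT2 : ∫ s in Ioc 0 t, α * Real.exp (α * s) * y s
        = y 0 * (Real.exp (α * t) - 1)
          + ∫ u in Ioc 0 t, (Real.exp (α * t) - Real.exp (α * u)) * y' u := by
      have e1 : ∫ s in Ioc 0 t, α * Real.exp (α * s) * y s
          = ∫ s in Ioc 0 t, (α * Real.exp (α * s) * y 0
              + α * Real.exp (α * s) * (∫ u in Ioc 0 s, y' u)) := by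
        apply setIntegral_congr_fun measurableSet_Ioc
        intro x hx
        show α * Real.exp (α * x) * y x = _
        rw [hFTC x (hsub hx), intervalIntegral.integral_of_le hx.1.le]
        ring
      have iconst : IntegrableOn (fun s => α * Real.exp (α * s) * y 0) (Ioc 0 t) := by
        exact Continuous.integrableOn_Ioc ((continuous_const.mul (Real.continuous_exp.comp (continuous_const.mul continuous_id))).mul continuous_const)
      rw [e1, integral_add iconst i3, key_identity α t hαpos.le ht0 y' hy'Ioc]
      congr 1
      have : (fun s => α * Real.exp (α * s) * y 0)
          = fun s => (fun s => α * Real.exp (α * s)) s * y 0 := rfl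
      rw [this, integral_mul_const, exp_int α 0 t ht0]
      simp [mul_comm]
    rw [hT2]
    have hcomb : (∫ s in Ioc 0 t, Real.exp (α * s) * y' s)
        + ∫ u in Ioc 0 t, (Real.exp (α * t) - Real.exp (α * u)) * y' u
        = Real.exp (α * t) * ∫ u in Ioc 0 t, y' u := by
      rw [← integral_add i1 ikey, ← integral_const_mul]
      apply setIntegral_congr_fun measurableSet_Ioc
      intro x _
      show Real.exp (α * x) * y' x + (Real.exp (α * t) - Real.exp (α * x)) * y' x
          = Real.exp (α * t) * y' x
      ring
    have hyt := hFTC t ⟨ht0, htt₁⟩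
    rw [intervalIntegral.integral_of_le ht0] at hyt
    rw [hyt]
    linear_combination hcomb
  -- Step B: inequality with g
  have hineq : Real.exp (α * t) * y t - y 0 ≤ ∫ s in Ioc 0 t, Real.exp (α * s) * g s := by
    rw [← hstep]
    apply integral_mono_ae (i1.add i2) ig
    have hae' : ∀ᵐ s ∂(volume.restrict (Ioc 0 t)), y' s + α * y s ≤ g s :=
      ae_restrict_of_ae_restrict_of_subset hsub hae
    filter_upwards [hae'] with s hs
    show Real.exp (α * s) * y' s + α * Real.exp (α * s) * y s ≤ Real.exp (α * s) * g s
    nlinarith [Real.exp_pos (α * s), hs]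
  -- Step C: replace g by |g̃|
  set G : ℝ → ℝ := fun s => |(Icc 0 t₁).indicator g s| with hGdef
  have hGint : Integrable G volume := (hg.integrable_indicator measurableSet_Icc).abs
  have hGnn : ∀ s, 0 ≤ G s := fun s => abs_nonneg _
  have iG : IntegrableOn (fun s => Real.exp (α * s) * G s) (Ioc 0 t) :=
    mul_intOn measurableSet_Ioc (Real.exp (α * t)) (Real.continuous_exp.comp (continuous_const.mul continuous_id)) hexpbd hGint.integrableOn
  have hineq2 : ∫ s in Ioc 0 t, Real.exp (α * s) * g s
      ≤ ∫ s in Ioc 0 t, Real.exp (α * s) * G s := by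
    apply setIntegral_mono_on ig iG measurableSet_Ioc
    intro x hx
    have hgx : g x = (Icc 0 t₁).indicator g x := (indicator_of_mem (hsub hx) g).symm
    have : g x ≤ G x := by rw [hGdef]; simp only; rw [hgx]; exact le_abs_self _
    exact mul_le_mul_of_nonneg_left this (Real.exp_pos _).le
  -- convert and apply tail bound
  have hconv : Real.exp (-(α * t)) * ∫ s in Ioc 0 t, Real.exp (α * s) * G s
      = ∫ s in Ioc 0 t, Real.exp (α * (s - t)) * G s := by
    rw [← integral_const_mul]
    apply setIntegral_congr_fun measurableSet_Ioc
    intro x _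
    show Real.exp (-(α * t)) * (Real.exp (α * x) * G x) = Real.exp (α * (x - t)) * G x
    rw [← mul_assoc, ← Real.exp_add]
    congr 2
    ring
  have htail : ∫ s in Ioc 0 t, Real.exp (α * (s - t)) * G s
      ≤ (∑ k ∈ Finset.range ⌈t⌉₊, Real.exp (-α) ^ k) * r := by
    apply tail_bound α r hαpos G hGint hGnn _ ⌈t⌉₊ t ht0 (Nat.le_ceil t)
    intro s hs
    simpa [hGdef] using hgbar s hs
  -- geometric sum bound
  have hxlt : Real.exp (-α) < 1 := Real.exp_lt_one_iff.2 (by linarith)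
  have hxpos : (0:ℝ) < 1 - Real.exp (-α) := by linarith
  have hgs : (∑ k ∈ Finset.range ⌈t⌉₊, Real.exp (-α) ^ k) ≤ 1 / (1 - Real.exp (-α)) := by
    have heq : (Real.exp (-α) ^ ⌈t⌉₊ - 1) / (Real.exp (-α) - 1)
        = (1 - Real.exp (-α) ^ ⌈t⌉₊) / (1 - Real.exp (-α)) := by
      rw [← neg_div_neg_eq]
      ring_nf
    have h1 : Real.exp (-α) ^ ⌈t⌉₊ ≤ 1 :=
      pow_le_one₀ (Real.exp_pos _).le hxlt.le
    have h2 : (0:ℝ) ≤ Real.exp (-α) ^ ⌈t⌉₊ := by positivity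
    rw [geom_sum_eq (ne_of_lt hxlt), heq, div_le_div_iff₀ hxpos hxpos]
    nlinarith
  -- final combination
  set S := ∫ s in Ioc 0 t, Real.exp (α * s) * G s with hSdef
  have hfin1 : Real.exp (α * t) * y t ≤ y 0 + S := by linarith
  have hy : y t ≤ Real.exp (-(α * t)) * (y 0 + S) := by
    have hmul := mul_le_mul_of_nonneg_left hfin1 (Real.exp_pos (-(α * t))).le
    rwa [← mul_assoc, ← Real.exp_add, neg_add_cancel, Real.exp_zero, one_mul] at hmul
  have hexp_le_one : Real.exp (-(α * t)) ≤ 1 := by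
    rw [← Real.exp_zero]
    apply Real.exp_le_exp.2
    nlinarith
  have h2' : Real.exp (-(α * t)) * S ≤ 1 / (1 - Real.exp (-α)) * r :=
    calc Real.exp (-(α * t)) * S
        = ∫ s in Ioc 0 t, Real.exp (α * (s - t)) * G s := hconv
      _ ≤ (∑ k ∈ Finset.range ⌈t⌉₊, Real.exp (-α) ^ k) * r := htail
      _ ≤ 1 / (1 - Real.exp (-α)) * r := mul_le_mul_of_nonneg_right hgs hr.le
  calc y t ≤ Real.exp (-(α * t)) * (y 0 + S) := hy
    _ = Real.exp (-(α * t)) * y 0 + Real.exp (-(α * t)) * S := by ring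
    _ ≤ y 0 + 1 / (1 - Real.exp (-α)) * r := by
        have := mul_le_of_le_one_left hy0nn hexp_le_one
        linarith
    _ ≤ Real.sqrt (2 / lam1) * r + 1 / (1 - Real.exp (-α)) * r := by linarith
    _ = (Real.sqrt (2 / lam1) + 1 / (1 - Real.exp (-α))) * r := by ring
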